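/- Let P be any finite poset on [d] and S a subset of the set of minimal elements of P. Let E_S(P) be the set of cover relations incident to some element of S. Then the edge partition ℓ = (E(P)∖E_S(P), E_S(P)) is integral, i.e., every vertex of OC_ℓ(P) = O(P'_ℓ) ∩ C(P''_ℓ) has integer coordinates. -/

import Mathlib

/-- `b` covers `a` in the partial order `r`. -/
def covRel {α : Type*} (r : α → α → Prop) (a b : α) : Prop :=
  r a b ∧ a ≠ b ∧ ∀ c, r a c → r c b → c = a ∨ c = b

/-- The partial order generated by a set of (cover) relations `e`. -/
def genOrd {d : ℕ} (e : Fin d → Fin d → Prop) : Fin d → Fin d → Prop :=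
  Relation.ReflTransGen e

/-- The order polytope of a partial order `r` on `Fin d`. -/
def orderPolytope {d : ℕ} (r : Fin d → Fin d → Prop) : Set (Fin d → ℝ) :=
  {x | (∀ i, 0 ≤ x i ∧ x i ≤ 1) ∧ ∀ i j, r i j → x j ≤ x i}

/-- The chain polytope of a partial order `r` on `Fin d`. -/
def chainPolytope {d : ℕ} (r : Fin d → Fin d → Prop) : Set (Fin d → ℝ) :=
  {x | (∀ i, 0 ≤ x i) ∧
    ∀ C : Finset (Fin d), IsMaxChain r (C : Set (Fin d)) → ∑ i ∈ C, x i ≤ 1}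

/-- for any poset `P` on `[d]` and any set `S` of minimal elements, the
edge partition `(E(P) ∖ E_S(P), E_S(P))`, where `E_S(P)` consists of the cover relations
incident to `S`, yields an integral order-chain polytope. -/
theorem stmt_16 (d : ℕ) (r : Fin d → Fin d → Prop) (hpo : IsPartialOrder (Fin d) r)
    (S : Set (Fin d)) (hS : ∀ a ∈ S, ∀ b, r b a → b = a) :
    ∀ v ∈ Set.extremePoints ℝ
        (orderPolytope (genOrd fun a b : Fin d => covRel r a b ∧ a ∉ S ∧ b ∉ S) ∩
         chainPolytope (genOrd fun a b : Fin d => covRel r a b ∧ (a ∈ S ∨ b ∈ S))),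
      ∀ k : Fin d, ∃ z : ℤ, v k = z := by
  classical
  intro v hv k
  by_contra hfrac
  push_neg at hfrac
  set oE : Fin d → Fin d → Prop := fun a b : Fin d => covRel r a b ∧ a ∉ S ∧ b ∉ S
    with hoEdef
  set cE : Fin d → Fin d → Prop := fun a b : Fin d => covRel r a b ∧ (a ∈ S ∨ b ∈ S)
    with hcEdef
  set P : Set (Fin d → ℝ) := orderPolytope (genOrd oE) ∩ chainPolytope (genOrd cE) with hPdef
  obtain ⟨⟨hvO, hvC⟩, hvext⟩ := hv
  obtain ⟨hbox, hord⟩ := hvO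
  obtain ⟨-, hch⟩ := hvC
  set t : ℝ := v k with htdef
  have ht0 : 0 < t := (hbox k).1.lt_of_ne (fun h => hfrac 0 (by simpa using h.symm))
  have ht1 : t < 1 := (hbox k).2.lt_of_ne (fun h => hfrac 1 (by simpa using h))
  -- basic facts about the edge sets
  have hcE' : ∀ a b : Fin d, cE a b → a ∈ S ∧ b ∉ S := by
    rintro a b ⟨⟨hab, hne, -⟩, hor⟩
    have hbS : b ∉ S := fun hb => hne (hS b hb a hab)
    rcases hor with h | h
    · exact ⟨h, hbS⟩
    · exact absurd h hbS
  have hstep : ∀ a b : Fin d, genOrd cE a b → a = b ∨ cE a b := by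
    intro a b h
    rcases Relation.ReflTransGen.cases_head h with rfl | ⟨m, hm, hmb⟩
    · exact Or.inl rfl
    · rcases Relation.ReflTransGen.cases_head hmb with rfl | ⟨n, hn, -⟩
      · exact Or.inr hm
      · exact absurd (hcE' _ _ hn).1 (hcE' _ _ hm).2
  have hoES : ∀ i j : Fin d, genOrd oE i j → i ≠ j → i ∉ S ∧ j ∉ S := by
    intro i j h hne
    constructor
    · rcases Relation.ReflTransGen.cases_head h with rfl | ⟨m, hm, -⟩
      · exact absurd rfl hne
      · exact hm.2.1
    · rcases Relation.ReflTransGen.cases_tail h with heq | ⟨m, -, hm⟩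
      · exact absurd heq hne.symm
      · exact hm.2.2
  -- the perturbation direction
  set w : Fin d → ℝ := fun i =>
    (if i ∈ S then (-1 : ℝ) else 1) * (if v i = t ∨ v i = 1 - t then 1 else 0) with hwdef
  have hwcase : ∀ i, w i = -1 ∨ w i = 0 ∨ w i = 1 := by
    intro i; simp only [hwdef]; split_ifs <;> norm_num
  have hwabs : ∀ i, |w i| ≤ 1 := by
    intro i; rcases hwcase i with h | h | h <;> simp [h]
  have hwval : ∀ i, w i ≠ 0 → (v i = t ∨ v i = 1 - t) := by
    intro i h
    by_contra hcon
    simp only [hwdef, if_neg hcon, mul_zero] at h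
    exact h rfl
  have hwk : w k ≠ 0 := by
    have hc : (v k = t ∨ v k = 1 - t) := Or.inl rfl
    show (if k ∈ S then (-1 : ℝ) else 1) * (if v k = t ∨ v k = 1 - t then 1 else 0) ≠ 0
    rw [if_pos hc]
    split_ifs <;> norm_num
  have hweq : ∀ i j : Fin d, i ∉ S → j ∉ S → v i = v j → w i = w j := by
    intro i j hi hj hij
    simp only [hwdef, if_neg hi, if_neg hj, hij]
  -- the perturbation size
  set T : Finset ℝ :=
    insert (min t (1 - t))
      (((Finset.univ : Finset (Fin d × Fin d)).filter (fun p => v p.2 < v p.1)).image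
          (fun p => v p.1 - v p.2) ∪
        ((Finset.univ : Finset (Fin d × Fin d)).filter (fun p => v p.1 + v p.2 < 1)).image
          (fun p => 1 - v p.1 - v p.2)) with hTdef
  have hTne : T.Nonempty := ⟨_, Finset.mem_insert_self _ _⟩
  have hTpos : ∀ x ∈ T, 0 < x := by
    intro x hx
    rcases Finset.mem_insert.mp hx with rfl | hx
    · exact lt_min ht0 (by linarith)
    · rcases Finset.mem_union.mp hx with hx | hx
      · obtain ⟨p, hp, rfl⟩ := Finset.mem_image.mp hx
        have := (Finset.mem_filter.mp hp).2
        linarith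
      · obtain ⟨p, hp, rfl⟩ := Finset.mem_image.mp hx
        have := (Finset.mem_filter.mp hp).2
        linarith
  set ε : ℝ := T.min' hTne / 2 with hεdef
  have hεpos : 0 < ε := by
    have := hTpos _ (T.min'_mem hTne)
    rw [hεdef]; linarith
  have hεle : ∀ x ∈ T, 2 * ε ≤ x := by
    intro x hx
    have := T.min'_le x hx
    rw [hεdef]; linarith
  have hεt : 2 * ε ≤ min t (1 - t) := hεle _ (Finset.mem_insert_self _ _)
  have hgap : ∀ i j : Fin d, v j < v i → 2 * ε ≤ v i - v j := by
    intro i j h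
    exact hεle _ (Finset.mem_insert_of_mem (Finset.mem_union_left _
      (Finset.mem_image.mpr ⟨(i, j), Finset.mem_filter.mpr ⟨Finset.mem_univ _, h⟩, rfl⟩)))
  have hslack : ∀ a b : Fin d, v a + v b < 1 → 2 * ε ≤ 1 - v a - v b := by
    intro a b h
    exact hεle _ (Finset.mem_insert_of_mem (Finset.mem_union_right _
      (Finset.mem_image.mpr ⟨(a, b), Finset.mem_filter.mpr ⟨Finset.mem_univ _, h⟩, rfl⟩)))
  have hvw : ∀ i, w i ≠ 0 → 2 * ε ≤ v i ∧ v i ≤ 1 - 2 * ε := by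
    intro i h
    have h1 : min t (1 - t) ≤ t := min_le_left _ _
    have h2 : min t (1 - t) ≤ 1 - t := min_le_right _ _
    rcases hwval i h with h' | h' <;> rw [h'] <;> constructor <;> linarith
  have hpert : ∀ σ : ℝ, |σ| ≤ 1 → ∀ i, -ε ≤ σ * (ε * w i) ∧ σ * (ε * w i) ≤ ε := by
    intro σ hσ i
    have h1 : |σ * (ε * w i)| ≤ ε := by
      rw [abs_mul, abs_mul, abs_of_pos hεpos]
      calc |σ| * (ε * |w i|) ≤ 1 * (ε * 1) := by
            apply mul_le_mul hσ ?_ (by positivity) one_pos.le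
            exact mul_le_mul_of_nonneg_left (hwabs i) hεpos.le
        _ = ε := by ring
    exact ⟨neg_le_of_abs_le h1, le_of_abs_le h1⟩
  have hzero : ∀ σ : ℝ, ∀ i, w i = 0 → σ * (ε * w i) = 0 := by
    intro σ i h; rw [h]; ring
  -- membership of the perturbed points
  have hmem : ∀ σ : ℝ, |σ| ≤ 1 → (fun i => v i + σ * (ε * w i)) ∈ P := by
    intro σ hσ
    have hlow : ∀ i, 0 ≤ v i + σ * (ε * w i) := by
      intro i
      by_cases hwi : w i = 0
      · rw [hzero σ i hwi]; simpa using (hbox i).1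
      · obtain ⟨hl, -⟩ := hvw i hwi
        obtain ⟨hp, -⟩ := hpert σ hσ i
        linarith
    refine ⟨⟨fun i => ⟨hlow i, ?_⟩, fun i j hij => ?_⟩, fun i => hlow i, fun C hC => ?_⟩
    · -- upper bound
      show v i + σ * (ε * w i) ≤ 1
      by_cases hwi : w i = 0
      · rw [hzero σ i hwi]; simpa using (hbox i).2
      · obtain ⟨-, hu⟩ := hvw i hwi
        obtain ⟨-, hp⟩ := hpert σ hσ i
        linarith
    · -- order polytope inequalities
      rcases eq_or_ne i j with rfl | hne
      · exact le_refl _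
      · have hvji : v j ≤ v i := hord i j hij
        rcases eq_or_lt_of_le hvji with heq | hlt
        · obtain ⟨hiS, hjS⟩ := hoES i j hij hne
          have hw : w i = w j := (hweq j i hjS hiS heq).symm
          show v j + σ * (ε * w j) ≤ v i + σ * (ε * w i)
          rw [hw, heq]
        · obtain ⟨h1, h2⟩ := hpert σ hσ i
          obtain ⟨h3, h4⟩ := hpert σ hσ j
          have := hgap i j hlt
          show v j + σ * (ε * w j) ≤ v i + σ * (ε * w i)
          linarith
    · -- chain polytope inequalities
      have hle := hch C hC
      have hpair : ∀ x ∈ C, ∀ y ∈ C, x ≠ y → cE x y ∨ cE y x := by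
        intro x hx y hy hxy
        rcases hC.1 (Finset.mem_coe.mpr hx) (Finset.mem_coe.mpr hy) hxy with h | h
        · rcases hstep _ _ h with rfl | h'
          · exact absurd rfl hxy
          · exact Or.inl h'
        · rcases hstep _ _ h with heq | h'
          · exact absurd heq hxy.symm
          · exact Or.inr h'
      have hkey : ∀ x y z : Fin d, cE x y → (cE x z ∨ cE z x) → (cE y z ∨ cE z y) → False := by
        intro x y z hxy h1 h2
        have hx := hcE' _ _ hxy
        rcases h2 with h | h
        · exact hx.2 (hcE' _ _ h).1
        · rcases h1 with h' | h'
          · exact (hcE' _ _ h').2 (hcE' _ _ h).1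
          · exact (hcE' _ _ h').2 hx.1
      have hcard : C.card ≤ 2 := by
        by_contra hc
        push_neg at hc
        obtain ⟨a, b, c, ha, hb, hcm, hab, hac, hbc⟩ := Finset.two_lt_card_iff.mp hc
        rcases hpair a ha b hb hab with h | h
        · exact hkey a b c h (hpair a ha c hcm hac) (hpair b hb c hcm hbc)
        · exact hkey b a c h (hpair b hb c hcm hbc) (hpair a ha c hcm hac)
      have hc3 : C.card = 0 ∨ C.card = 1 ∨ C.card = 2 := by omega
      have hmain : ∀ x y : Fin d, cE x y → v x + v y ≤ 1 →
          (v x + σ * (ε * w x)) + (v y + σ * (ε * w y)) ≤ 1 := by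
        intro x y hxy hsum
        obtain ⟨hxS, hyS⟩ := hcE' _ _ hxy
        rcases eq_or_lt_of_le hsum with heq | hlt
        · have hvy : v y = 1 - v x := by linarith
          have hwxy : w x + w y = 0 := by
            simp only [hwdef, if_pos hxS, if_neg hyS]
            by_cases hx' : v x = t ∨ v x = 1 - t
            · have hy' : v y = t ∨ v y = 1 - t := by
                rcases hx' with h | h
                · right; rw [hvy, h]
                · left; rw [hvy, h]; ring
              rw [if_pos hx', if_pos hy']; ring
            · have hy' : ¬(v y = t ∨ v y = 1 - t) := by
                intro h
                apply hx'
                rcases h with h | h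
                · right; rw [hvy] at h; linarith
                · left; rw [hvy] at h; linarith
              rw [if_neg hx', if_neg hy']; ring
          have hps : σ * (ε * w x) + σ * (ε * w y) = σ * ε * (w x + w y) := by ring
          have hz : σ * ε * (w x + w y) = 0 := by rw [hwxy]; ring
          linarith
        · obtain ⟨-, hp1⟩ := hpert σ hσ x
          obtain ⟨-, hp2⟩ := hpert σ hσ y
          have := hslack x y hlt
          linarith
      rcases hc3 with h0 | h1 | h2
      · rw [Finset.card_eq_zero.mp h0]
        simp
      · obtain ⟨a, rfl⟩ := Finset.card_eq_one.mp h1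
        rw [Finset.sum_singleton]
        show v a + σ * (ε * w a) ≤ 1
        by_cases hwa : w a = 0
        · rw [hzero σ a hwa]; simpa using (hbox a).2
        · obtain ⟨-, hu⟩ := hvw a hwa
          obtain ⟨-, hp⟩ := hpert σ hσ a
          linarith
      · obtain ⟨a, b, hab, rfl⟩ := Finset.card_eq_two.mp h2
        rw [Finset.sum_pair hab] at hle ⊢
        show (v a + σ * (ε * w a)) + (v b + σ * (ε * w b)) ≤ 1
        have hcmp := hpair a (by simp) b (by simp) hab
        rcases hcmp with h | h
        · exact hmain a b h hle
        · have hswap : (v a + σ * (ε * w a)) + (v b + σ * (ε * w b)) =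
              (v b + σ * (ε * w b)) + (v a + σ * (ε * w a)) := by ring
          rw [hswap]
          exact hmain b a h (by linarith)
  -- contradiction with extremeness
  have h1 := hmem 1 (by norm_num)
  have h2 := hmem (-1) (by norm_num)
  have hseg : v ∈ openSegment ℝ (fun i => v i + (1 : ℝ) * (ε * w i))
      (fun i => v i + (-1 : ℝ) * (ε * w i)) := by
    refine ⟨1 / 2, 1 / 2, by norm_num, by norm_num, by norm_num, ?_⟩
    funext i
    simp only [Pi.add_apply, Pi.smul_apply, smul_eq_mul]
    ring
  have heq1 := hvext h1 h2 hseg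
  have h3 : v k + 1 * (ε * w k) = v k := congrFun heq1 k
  have h4 : ε * w k = 0 := by linarith
  rcases mul_eq_zero.mp h4 with h | h
  · exact absurd h (ne_of_gt hεpos)
  · exact hwk h
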